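/- Let C and D be monoidal categories and E a symmetric monoidal category. Let F₁, F₂ : C × D ⥤ E be functors, each equipped with natural morphisms (λᵢ¹, λᵢ²), i = 1, 2, satisfying the bimonoidal compatibility condition. Define the pointwise tensor product functor F := F₁ ⊗ F₂ by F(x,y) := F₁(x,y) ⊗ F₂(x,y), with structure morphisms λ¹_{x,x',y} := ĉ ≫ (λ₁¹_{x,x',y} ⊗ λ₂¹_{x,x',y}) : (F₁(x,y)⊗F₂(x,y)) ⊗ (F₁(x',y)⊗F₂(x',y)) → F₁(x⊗x',y) ⊗ F₂(x⊗x',y), and λ²_{x,y,y'} := ĉ ≫ (λ₁²_{x,y,y'} ⊗ λ₂²_{x,y,y'}), where ĉ denotes the middle-four interchange of the symmetric braiding. Then (F, λ¹, λ²) satisfies the bimonoidal compatibility condition. -/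

import Mathlib

/-!
Statement 12: let `E` be a symmetric monoidal category, and `F₁, F₂ : C × D ⥤ E`
functors each equipped with natural morphisms `(λᵢ¹, λᵢ²)` satisfying the
bimonoidal compatibility condition.  Then the pointwise tensor product
`F = F₁ ⊗ F₂`, with structure morphisms `λ¹ = ĉ ≫ (λ₁¹ ⊗ λ₂¹)` and
`λ² = ĉ ≫ (λ₁² ⊗ λ₂²)`, satisfies the bimonoidal compatibility condition.
-/

open CategoryTheory MonoidalCategory

section

variable {C D E : Type*} [Category C] [Category D] [Category E]
  [MonoidalCategory C] [MonoidalCategory D] [MonoidalCategory E] [BraidedCategory E]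

/-- The braided middle-four interchange
`ĉ_{P,Q,R,S} : (P⊗Q)⊗(R⊗S) ⟶ (P⊗R)⊗(Q⊗S)`. -/
def braidedInterchange (P Q R S : E) : (P ⊗ Q) ⊗ (R ⊗ S) ⟶ (P ⊗ R) ⊗ (Q ⊗ S) :=
  (α_ P Q (R ⊗ S)).hom ≫
    (P ◁ ((α_ Q R S).inv ≫ ((β_ Q R).hom ▷ S) ≫ (α_ R Q S).hom)) ≫
      (α_ P R (Q ⊗ S)).inv

/-- The bimonoidal compatibility condition for a bifunctor `F : C × D ⥤ E`
equipped with partial monoidal structure morphisms `λ¹, λ²`. -/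
def BimonoidalCompat (F : C × D ⥤ E)
    (l1 : ∀ (x x' : C) (y : D), F.obj (x, y) ⊗ F.obj (x', y) ⟶ F.obj (x ⊗ x', y))
    (l2 : ∀ (x : C) (y y' : D), F.obj (x, y) ⊗ F.obj (x, y') ⟶ F.obj (x, y ⊗ y')) :
    Prop :=
  ∀ (x x' : C) (y y' : D),
    braidedInterchange (F.obj (x, y)) (F.obj (x', y)) (F.obj (x, y')) (F.obj (x', y')) ≫
        (l2 x y y' ⊗ₘ l2 x' y y') ≫ l1 x x' (y ⊗ y') =
      (l1 x x' y ⊗ₘ l1 x x' y') ≫ l2 (x ⊗ x') y y'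

end


section Aux

open Functor.LaxMonoidal BraidedCategory

variable {C D : Type*} [Category C] [Category D] [MonoidalCategory C] [MonoidalCategory D]
  [BraidedCategory C] [BraidedCategory D]

set_option maxHeartbeats 1000000 in
/-- A braided lax monoidal functor commutes with the braided interchange `tensorμ`. -/
theorem map_tensorμ'' (F : C ⥤ D) [F.LaxMonoidal]
    (hβ : ∀ X Y : C, μ F X Y ≫ F.map (β_ X Y).hom = (β_ (F.obj X) (F.obj Y)).hom ≫ μ F Y X)
    (X Y Z W : C) :
    tensorμ (F.obj X) (F.obj Y) (F.obj Z) (F.obj W) ≫ (μ F X Z ⊗ₘ μ F Y W) ≫ μ F (X ⊗ Z) (Y ⊗ W) =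
      (μ F X Y ⊗ₘ μ F Z W) ≫ μ F (X ⊗ Y) (Z ⊗ W) ≫ F.map (tensorμ X Y Z W) := by
  calc tensorμ (F.obj X) (F.obj Y) (F.obj Z) (F.obj W) ≫ (μ F X Z ⊗ₘ μ F Y W) ≫
        μ F (X ⊗ Z) (Y ⊗ W)
      = 𝟙 _ ⊗≫ F.obj X ◁ (β_ (F.obj Y) (F.obj Z)).hom ▷ F.obj W ⊗≫
          (μ F X Z ▷ (F.obj Y ⊗ F.obj W) ≫ F.obj (X ⊗ Z) ◁ μ F Y W) ⊗≫
          μ F (X ⊗ Z) (Y ⊗ W) := by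
        rw [MonoidalCategory.tensorHom_def]; dsimp only [tensorμ]; monoidal
    _ = 𝟙 _ ⊗≫ F.obj X ◁ (β_ (F.obj Y) (F.obj Z)).hom ▷ F.obj W ⊗≫
          (F.obj X ⊗ F.obj Z) ◁ μ F Y W ⊗≫
          ((α_ (F.obj X) (F.obj Z) (F.obj (Y ⊗ W))).inv ≫ μ F X Z ▷ F.obj (Y ⊗ W) ≫
            μ F (X ⊗ Z) (Y ⊗ W)) := by
        rw [← whisker_exchange]; monoidal
    _ = 𝟙 _ ⊗≫ F.obj X ◁ (β_ (F.obj Y) (F.obj Z)).hom ▷ F.obj W ⊗≫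
          (F.obj X ⊗ F.obj Z) ◁ μ F Y W ⊗≫
          (F.obj X ◁ μ F Z (Y ⊗ W) ≫ μ F X (Z ⊗ (Y ⊗ W)) ≫ F.map (α_ X Z (Y ⊗ W)).inv) := by
        rw [Functor.LaxMonoidal.associativity_inv]
    _ = 𝟙 _ ⊗≫ F.obj X ◁ ((((β_ (F.obj Y) (F.obj Z)).hom ≫ μ F Z Y) ▷ F.obj W) ≫
            μ F (Z ⊗ Y) W ≫ F.map (α_ Z Y W).hom) ⊗≫
          (μ F X (Z ⊗ (Y ⊗ W)) ≫ F.map (α_ X Z (Y ⊗ W)).inv) := by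
        rw [comp_whiskerRight]; simp only [Category.assoc]
        rw [Functor.LaxMonoidal.associativity]; monoidal
    _ = 𝟙 _ ⊗≫ F.obj X ◁ (μ F Y Z ▷ F.obj W ≫ μ F (Y ⊗ Z) W ≫
            F.map ((β_ Y Z).hom ▷ W) ≫ F.map (α_ Z Y W).hom) ⊗≫
          (μ F X (Z ⊗ (Y ⊗ W)) ≫ F.map (α_ X Z (Y ⊗ W)).inv) := by
        rw [← hβ, comp_whiskerRight]; simp only [Category.assoc]
        rw [Functor.LaxMonoidal.μ_natural_left_assoc]
    _ = 𝟙 _ ⊗≫ F.obj X ◁ (μ F Y Z ▷ F.obj W ≫ μ F (Y ⊗ Z) W) ⊗≫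
          (F.obj X ◁ F.map ((β_ Y Z).hom ▷ W) ≫ F.obj X ◁ F.map (α_ Z Y W).hom ≫
            μ F X (Z ⊗ (Y ⊗ W)) ≫ F.map (α_ X Z (Y ⊗ W)).inv) := by
        monoidal
    _ = 𝟙 _ ⊗≫ F.obj X ◁ (μ F Y Z ▷ F.obj W ≫ μ F (Y ⊗ Z) W) ⊗≫
          (μ F X ((Y ⊗ Z) ⊗ W) ≫ F.map (X ◁ ((β_ Y Z).hom ▷ W)) ≫
            F.map (X ◁ (α_ Z Y W).hom) ≫ F.map (α_ X Z (Y ⊗ W)).inv) := by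
        simp only [Functor.LaxMonoidal.μ_natural_right_assoc,
          Functor.LaxMonoidal.μ_natural_right, Category.assoc]
    _ = 𝟙 _ ⊗≫ F.obj X ◁ (F.obj Y ◁ μ F Z W ≫ μ F Y (Z ⊗ W) ≫ F.map (α_ Y Z W).inv) ⊗≫
          (μ F X ((Y ⊗ Z) ⊗ W) ≫ F.map (X ◁ ((β_ Y Z).hom ▷ W)) ≫
            F.map (X ◁ (α_ Z Y W).hom) ≫ F.map (α_ X Z (Y ⊗ W)).inv) := by
        rw [Functor.LaxMonoidal.associativity_inv]; monoidal
    _ = 𝟙 _ ⊗≫ F.obj X ◁ (F.obj Y ◁ μ F Z W) ⊗≫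
          (F.obj X ◁ μ F Y (Z ⊗ W) ≫ F.obj X ◁ F.map (α_ Y Z W).inv ≫
            μ F X ((Y ⊗ Z) ⊗ W) ≫ F.map (X ◁ ((β_ Y Z).hom ▷ W)) ≫
            F.map (X ◁ (α_ Z Y W).hom) ≫ F.map (α_ X Z (Y ⊗ W)).inv) := by
        monoidal
    _ = 𝟙 _ ⊗≫ ((F.obj X ⊗ F.obj Y : D) ◁ μ F Z W) ⊗≫
          (F.obj X ◁ μ F Y (Z ⊗ W) ≫ μ F X (Y ⊗ (Z ⊗ W)) ≫ F.map (X ◁ (α_ Y Z W).inv) ≫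
            F.map (X ◁ ((β_ Y Z).hom ▷ W)) ≫
            F.map (X ◁ (α_ Z Y W).hom) ≫ F.map (α_ X Z (Y ⊗ W)).inv) := by
        simp only [Functor.LaxMonoidal.μ_natural_right_assoc,
          Functor.LaxMonoidal.μ_natural_right, Category.assoc]
        monoidal
    _ = 𝟙 _ ⊗≫ ((F.obj X ⊗ F.obj Y : D) ◁ μ F Z W) ⊗≫
          (μ F X Y ▷ F.obj (Z ⊗ W) ≫ μ F (X ⊗ Y) (Z ⊗ W) ≫ F.map (α_ X Y (Z ⊗ W)).hom ≫
            F.map (X ◁ (α_ Y Z W).inv) ≫ F.map (X ◁ ((β_ Y Z).hom ▷ W)) ≫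
            F.map (X ◁ (α_ Z Y W).hom) ≫ F.map (α_ X Z (Y ⊗ W)).inv) := by
        rw [Functor.LaxMonoidal.associativity_assoc]; monoidal
    _ = 𝟙 _ ⊗≫ (μ F X Y ▷ (F.obj Z ⊗ F.obj W) ≫ F.obj (X ⊗ Y) ◁ μ F Z W) ⊗≫
          (μ F (X ⊗ Y) (Z ⊗ W) ≫ F.map (α_ X Y (Z ⊗ W)).hom ≫
            F.map (X ◁ (α_ Y Z W).inv) ≫ F.map (X ◁ ((β_ Y Z).hom ▷ W)) ≫
            F.map (X ◁ (α_ Z Y W).hom) ≫ F.map (α_ X Z (Y ⊗ W)).inv) := by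
        rw [← whisker_exchange]; monoidal
    _ = (μ F X Y ⊗ₘ μ F Z W) ≫ μ F (X ⊗ Y) (Z ⊗ W) ≫ F.map (tensorμ X Y Z W) := by
        rw [MonoidalCategory.tensorHom_def]; dsimp only [tensorμ]; simp only [Functor.map_comp]; monoidal

end Aux

section SymmAux

variable {E : Type*} [Category E] [MonoidalCategory E] [SymmetricCategory E]

set_option maxHeartbeats 1000000 in
theorem tensorμ_braiding'' (X₁ X₂ Y₁ Y₂ : E) :
    tensorμ X₁ X₂ Y₁ Y₂ ≫ ((β_ X₁ Y₁).hom ⊗ₘ (β_ X₂ Y₂).hom) =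
      (β_ (X₁ ⊗ X₂) (Y₁ ⊗ Y₂)).hom ≫ tensorμ Y₁ Y₂ X₁ X₂ := by
  simp [tensorμ]
  slice_rhs 10 11 =>
    rw [← MonoidalCategory.whiskerLeft_comp, ← comp_whiskerRight, SymmetricCategory.symmetry]
  simp only [id_whiskerRight, MonoidalCategory.whiskerLeft_id, Category.id_comp]
  rw [MonoidalCategory.tensorHom_def]
  monoidal

/-- The braided category structure on `E × E` (componentwise). -/
instance prodBraided' : BraidedCategory (E × E) where
  braiding X Y := (β_ X.1 Y.1).prod (β_ X.2 Y.2)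
  braiding_naturality_left f Z :=
    Prod.ext (BraidedCategory.braiding_naturality_left f.1 Z.1)
      (BraidedCategory.braiding_naturality_left f.2 Z.2)
  braiding_naturality_right X _ _ f :=
    Prod.ext (BraidedCategory.braiding_naturality_right X.1 f.1)
      (BraidedCategory.braiding_naturality_right X.2 f.2)
  hexagon_forward X Y Z :=
    Prod.ext (BraidedCategory.hexagon_forward X.1 Y.1 Z.1)
      (BraidedCategory.hexagon_forward X.2 Y.2 Z.2)
  hexagon_reverse X Y Z :=
    Prod.ext (BraidedCategory.hexagon_reverse X.1 Y.1 Z.1)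
      (BraidedCategory.hexagon_reverse X.2 Y.2 Z.2)

/-- The interchange of interchanges, in a symmetric monoidal category. -/
theorem tensorμ_tensorμ (A₁ B₁ A₂ B₂ A₃ B₃ A₄ B₄ : E) :
    tensorμ (A₁ ⊗ B₁) (A₂ ⊗ B₂) (A₃ ⊗ B₃) (A₄ ⊗ B₄) ≫
      (tensorμ A₁ B₁ A₃ B₃ ⊗ₘ tensorμ A₂ B₂ A₄ B₄) ≫
        tensorμ (A₁ ⊗ A₃) (B₁ ⊗ B₃) (A₂ ⊗ A₄) (B₂ ⊗ B₄) =
    (tensorμ A₁ B₁ A₂ B₂ ⊗ₘ tensorμ A₃ B₃ A₄ B₄) ≫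
      tensorμ (A₁ ⊗ A₂) (B₁ ⊗ B₂) (A₃ ⊗ A₄) (B₃ ⊗ B₄) ≫
        (tensorμ A₁ A₂ A₃ A₄ ⊗ₘ tensorμ B₁ B₂ B₃ B₄) := by
  have h := map_tensorμ'' (tensor E)
    (fun X Y => tensorμ_braiding'' X.1 X.2 Y.1 Y.2)
    (A₁, B₁) (A₂, B₂) (A₃, B₃) (A₄, B₄)
  have e1 : (tensorμ (A₁, B₁) (A₂, B₂) (A₃, B₃) (A₄, B₄)).1 = tensorμ A₁ A₂ A₃ A₄ := rfl
  have e2 : (tensorμ (A₁, B₁) (A₂, B₂) (A₃, B₃) (A₄, B₄)).2 = tensorμ B₁ B₂ B₃ B₄ := rfl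
  simpa [e1, e2] using h

theorem braidedInterchange_eq_tensorμ (P Q R S : E) :
    braidedInterchange P Q R S = tensorμ P Q R S := by
  simp [braidedInterchange, tensorμ]

end SymmAux

theorem bimonoidalCompat_pointwise_tensor
    {C D E : Type*} [Category C] [Category D] [Category E]
    [MonoidalCategory C] [MonoidalCategory D] [MonoidalCategory E]
    [SymmetricCategory E]
    (F₁ F₂ : C × D ⥤ E)
    (l11 : ∀ (x x' : C) (y : D), F₁.obj (x, y) ⊗ F₁.obj (x', y) ⟶ F₁.obj (x ⊗ x', y))
    (l12 : ∀ (x : C) (y y' : D), F₁.obj (x, y) ⊗ F₁.obj (x, y') ⟶ F₁.obj (x, y ⊗ y'))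
    (l21 : ∀ (x x' : C) (y : D), F₂.obj (x, y) ⊗ F₂.obj (x', y) ⟶ F₂.obj (x ⊗ x', y))
    (l22 : ∀ (x : C) (y y' : D), F₂.obj (x, y) ⊗ F₂.obj (x, y') ⟶ F₂.obj (x, y ⊗ y'))
    -- naturality of the structure morphisms of `F₁`
    (hl11nat : ∀ {x x₁ x' x₁' : C} {y y₁ : D} (f : x ⟶ x₁) (f' : x' ⟶ x₁') (g : y ⟶ y₁),
      (F₁.map ((f, g) : (x, y) ⟶ (x₁, y₁)) ⊗ₘ F₁.map ((f', g) : (x', y) ⟶ (x₁', y₁))) ≫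
          l11 x₁ x₁' y₁ =
        l11 x x' y ≫ F₁.map ((f ⊗ₘ f', g) : (x ⊗ x', y) ⟶ (x₁ ⊗ x₁', y₁)))
    (hl12nat : ∀ {x x₁ : C} {y y₁ y' y₁' : D} (f : x ⟶ x₁) (g : y ⟶ y₁) (g' : y' ⟶ y₁'),
      (F₁.map ((f, g) : (x, y) ⟶ (x₁, y₁)) ⊗ₘ F₁.map ((f, g') : (x, y') ⟶ (x₁, y₁'))) ≫
          l12 x₁ y₁ y₁' =
        l12 x y y' ≫ F₁.map ((f, g ⊗ₘ g') : (x, y ⊗ y') ⟶ (x₁, y₁ ⊗ y₁')))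
    -- naturality of the structure morphisms of `F₂`
    (hl21nat : ∀ {x x₁ x' x₁' : C} {y y₁ : D} (f : x ⟶ x₁) (f' : x' ⟶ x₁') (g : y ⟶ y₁),
      (F₂.map ((f, g) : (x, y) ⟶ (x₁, y₁)) ⊗ₘ F₂.map ((f', g) : (x', y) ⟶ (x₁', y₁))) ≫
          l21 x₁ x₁' y₁ =
        l21 x x' y ≫ F₂.map ((f ⊗ₘ f', g) : (x ⊗ x', y) ⟶ (x₁ ⊗ x₁', y₁)))
    (hl22nat : ∀ {x x₁ : C} {y y₁ y' y₁' : D} (f : x ⟶ x₁) (g : y ⟶ y₁) (g' : y' ⟶ y₁'),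
      (F₂.map ((f, g) : (x, y) ⟶ (x₁, y₁)) ⊗ₘ F₂.map ((f, g') : (x, y') ⟶ (x₁, y₁'))) ≫
          l22 x₁ y₁ y₁' =
        l22 x y y' ≫ F₂.map ((f, g ⊗ₘ g') : (x, y ⊗ y') ⟶ (x₁, y₁ ⊗ y₁')))
    (h1 : BimonoidalCompat F₁ l11 l12)
    (h2 : BimonoidalCompat F₂ l21 l22) :
    BimonoidalCompat (F₁ ⊗ F₂)
      (fun x x' y =>
        braidedInterchange (F₁.obj (x, y)) (F₂.obj (x, y)) (F₁.obj (x', y)) (F₂.obj (x', y)) ≫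
          (l11 x x' y ⊗ₘ l21 x x' y))
      (fun x y y' =>
        braidedInterchange (F₁.obj (x, y)) (F₂.obj (x, y)) (F₁.obj (x, y')) (F₂.obj (x, y')) ≫
          (l12 x y y' ⊗ₘ l22 x y y')) := by
  intro x x' y y'
  simp only [braidedInterchange_eq_tensorμ, Monoidal.tensorObj_obj]
  have h1' := h1 x x' y y'
  have h2' := h2 x x' y y'
  rw [braidedInterchange_eq_tensorμ] at h1' h2'
  rw [← tensorHom_comp_tensorHom]
  slice_lhs 3 4 => rw [tensorμ_natural]
  slice_lhs 1 3 => rw [tensorμ_tensorμ]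
  slice_lhs 3 5 => rw [tensorHom_comp_tensorHom, tensorHom_comp_tensorHom]
  rw [h1', h2']
  slice_rhs 1 1 => rw [← tensorHom_comp_tensorHom]
  slice_rhs 2 3 => rw [tensorμ_natural]
  slice_rhs 3 4 => rw [tensorHom_comp_tensorHom]
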